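/- The monic polynomial 2^{1-n} T_n, where T_n is the Chebyshev polynomial of the first kind, has sup-norm exactly 2^{1-n} on [-1,1], and every monic polynomial of degree n has sup-norm at least 2^{1-n} on [-1,1]. -/

import Mathlib

open Polynomial Real

lemma cheb_deg (n : ℕ) : (Chebyshev.T ℝ (n+1)).natDegree = n+1 ∧
    (Chebyshev.T ℝ (n+1)).leadingCoeff = 2^n := by
  induction n using Nat.twoStepInduction with
  | zero => simp [Chebyshev.T_one]
  | one =>
    rw [show ((1:ℕ):ℤ)+1 = 2 by norm_num, Chebyshev.T_two]
    have hd : (2 * X ^ 2 - 1 : ℝ[X]).natDegree = 2 := by compute_degree! <;> simp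
    refine ⟨hd, ?_⟩
    rw [Polynomial.leadingCoeff, hd]; simp [Polynomial.coeff_one]
  | more n ih1 ih2 =>
    rw [show ((n+2:ℕ):ℤ)+1 = (n:ℤ)+3 by push_cast; ring]
    rw [show ((n+1:ℕ):ℤ)+1 = (n:ℤ)+2 by push_cast; ring] at ih2
    have key : Chebyshev.T ℝ ((n:ℤ)+3) = 2 * X * Chebyshev.T ℝ ((n:ℤ)+2) - Chebyshev.T ℝ ((n:ℤ)+1) := by
      have := Chebyshev.T_add_two ℝ ((n:ℤ)+1)
      convert this using 2 <;> ring
    have h2X : (2 * X : ℝ[X]).natDegree = 1 := by compute_degree!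
    have h2Xl : (2 * X : ℝ[X]).leadingCoeff = 2 := by
      rw [Polynomial.leadingCoeff, h2X]; simp
    have hTne : Chebyshev.T ℝ ((n:ℤ)+2) ≠ 0 := by
      intro h
      have h2 := ih2.2
      rw [h, Polynomial.leadingCoeff_zero] at h2
      exact absurd h2.symm (ne_of_gt (by positivity))
    have hmul : (2 * X * Chebyshev.T ℝ ((n:ℤ)+2)).natDegree = n + 3 := by
      rw [natDegree_mul (Polynomial.leadingCoeff_ne_zero.mp (by rw [h2Xl]; norm_num)) hTne, h2X, ih2.1]; ring
    have hlt : (Chebyshev.T ℝ ((n:ℤ)+1)).natDegree < (2 * X * Chebyshev.T ℝ ((n:ℤ)+2)).natDegree := by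
      rw [hmul, ih1.1]; omega
    constructor
    · rw [key, natDegree_sub_eq_left_of_natDegree_lt hlt, hmul]
    · have hA : (2 * X * Chebyshev.T ℝ ((n:ℤ)+2)).coeff (n+3) = 2^(n+2) := by
        rw [← hmul, ← Polynomial.leadingCoeff, Polynomial.leadingCoeff_mul, h2Xl, ih2.2]; ring
      have hB : (Chebyshev.T ℝ ((n:ℤ)+1)).coeff (n+3) = 0 :=
        Polynomial.coeff_eq_zero_of_natDegree_lt (by rw [ih1.1]; omega)
      rw [key, Polynomial.leadingCoeff, natDegree_sub_eq_left_of_natDegree_lt hlt, hmul,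
        Polynomial.coeff_sub, hA, hB, sub_zero]

/-- Chebyshev's extremal theorem: the monic polynomial `2^{1-n} Tₙ` has sup-norm exactly
`2^{1-n}` on `[-1,1]`, and every monic polynomial of degree `n` has sup-norm at least
`2^{1-n}` there. -/
theorem chebyshev_minimal_sup_norm (n : ℕ) (hn : 1 ≤ n) :
    (∀ x ∈ Set.Icc (-1 : ℝ) 1,
        |(2 : ℝ) ^ ((1 : ℤ) - n) * (Polynomial.Chebyshev.T ℝ n).eval x|
          ≤ (2 : ℝ) ^ ((1 : ℤ) - n))
    ∧ (∃ x ∈ Set.Icc (-1 : ℝ) 1,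
        |(2 : ℝ) ^ ((1 : ℤ) - n) * (Polynomial.Chebyshev.T ℝ n).eval x|
          = (2 : ℝ) ^ ((1 : ℤ) - n))
    ∧ ∀ p : Polynomial ℝ, p.Monic → p.natDegree = n →
        ∃ x ∈ Set.Icc (-1 : ℝ) 1, (2 : ℝ) ^ ((1 : ℤ) - n) ≤ |p.eval x| := by
  set c : ℝ := (2 : ℝ) ^ ((1 : ℤ) - n) with hcdef
  have hc : 0 < c := by positivity
  have hn0 : (n : ℝ) ≠ 0 := by positivity
  have hnpos : (0:ℝ) < n := by positivity
  -- evaluation bound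
  have hbound : ∀ x ∈ Set.Icc (-1:ℝ) 1, |(Chebyshev.T ℝ n).eval x| ≤ 1 := by
    intro x hx
    have : x = Real.cos (Real.arccos x) := (Real.cos_arccos hx.1 hx.2).symm
    rw [this, Chebyshev.T_real_cos]
    exact Real.abs_cos_le_one _
  have heval1 : (Chebyshev.T ℝ n).eval 1 = 1 := by
    have := Chebyshev.T_real_cos 0 n
    simpa using this
  refine ⟨?_, ?_, ?_⟩
  · intro x hx
    rw [abs_mul, abs_of_pos hc]
    calc c * |(Chebyshev.T ℝ n).eval x| ≤ c * 1 :=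
          mul_le_mul_of_nonneg_left (hbound x hx) hc.le
      _ = c := mul_one c
  · exact ⟨1, by norm_num, by rw [heval1, mul_one, abs_of_pos hc]⟩
  · intro p hp hpd
    by_contra hcon
    push_neg at hcon
    set q : ℝ[X] := Polynomial.C c * Chebyshev.T ℝ n - p with hq
    have h1mem : (1:ℝ) ∈ Set.Icc (-1:ℝ) 1 := by norm_num
    -- q ≠ 0
    have hqne : q ≠ 0 := by
      intro h
      have he : p.eval 1 = c := by
        have := congrArg (Polynomial.eval 1) h
        simp [hq, heval1] at this
        linarith [this]
      have h2 := hcon 1 h1mem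
      rw [he, abs_of_pos hc] at h2
      exact lt_irrefl _ h2
    -- degree facts for T
    obtain ⟨m, hm⟩ : ∃ m, n = m + 1 := ⟨n - 1, by omega⟩
    have hT := cheb_deg m
    rw [show ((m:ℤ)+1) = (n:ℤ) by rw [hm]; push_cast; ring, ← hm] at hT
    have hcC : Polynomial.C c ≠ 0 := by simp [hc.ne']
    have hTdeg : (Polynomial.C c * Chebyshev.T ℝ n).natDegree = n := by
      rw [Polynomial.natDegree_C_mul hc.ne', hT.1]
    -- leading coefficient of C c * T equals 1
    have hc2 : c * 2 ^ m = 1 := by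
      rw [hcdef, hm]
      rw [show ((2:ℝ)^m = (2:ℝ)^(m:ℤ)) from (zpow_natCast 2 m).symm,
        ← zpow_add₀ (two_ne_zero)]
      norm_num
    have hlead : (Polynomial.C c * Chebyshev.T ℝ n).coeff n = 1 := by
      have : (Polynomial.C c * Chebyshev.T ℝ n).coeff n
          = c * (Chebyshev.T ℝ n).coeff n := by simp
      rw [this, show (Chebyshev.T ℝ n).coeff n = 2^m from (by
        have := hT.2; rwa [Polynomial.leadingCoeff, hT.1] at this), hc2]
    -- natDegree q < n
    have hqcoeff : q.coeff n = 0 := by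
      rw [hq, Polynomial.coeff_sub, hlead, ← hpd, ← Polynomial.leadingCoeff, hp.leadingCoeff]
      ring
    have hqdegle : q.natDegree ≤ n :=
      le_trans (Polynomial.natDegree_sub_le _ _) (by rw [hTdeg, hpd]; simp)
    have hqdeg : q.natDegree < n := by
      rcases lt_or_eq_of_le hqdegle with h | h
      · exact h
      · exfalso
        apply hqne
        have := Polynomial.leadingCoeff_ne_zero.mpr hqne
        rw [Polynomial.leadingCoeff, h, hqcoeff] at this
        exact absurd rfl this
    -- the extremal points
    set xs : ℕ → ℝ := fun k => Real.cos (k * π / n) with hxs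
    have hxmem : ∀ k, k ≤ n → (k * π / n : ℝ) ∈ Set.Icc 0 π := by
      intro k hk
      constructor
      · positivity
      · rw [div_le_iff₀ hnpos]
        have : (k:ℝ) ≤ n := Nat.cast_le.mpr hk
        nlinarith [Real.pi_pos]
    have hxanti : ∀ k l, k < l → l ≤ n → xs l < xs k := by
      intro k l hkl hl
      apply Real.strictAntiOn_cos (hxmem k (by omega)) (hxmem l hl)
      have hkl' : (k:ℝ) < l := Nat.cast_lt.mpr hkl
      have hpi := Real.pi_pos
      gcongr
    -- sign alternation of q at the extremal points
    have hTk : ∀ k : ℕ, (Chebyshev.T ℝ n).eval (xs k) = (-1:ℝ)^k := by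
      intro k
      rw [hxs]
      simp only
      rw [Chebyshev.T_real_cos]
      have : (n:ℝ) * (k * π / n) = 0 + k * π := by field_simp; ring
      rw [show ((n:ℤ):ℝ) = (n:ℝ) by push_cast; ring, this, Real.cos_add_nat_mul_pi]
      simp
    have hxsmem : ∀ k : ℕ, xs k ∈ Set.Icc (-1:ℝ) 1 :=
      fun k => ⟨Real.neg_one_le_cos _, Real.cos_le_one _⟩
    have hsign : ∀ k : ℕ, 0 < (-1:ℝ)^k * q.eval (xs k) := by
      intro k
      have hqe : q.eval (xs k) = c * (-1:ℝ)^k - p.eval (xs k) := by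
        simp [hq, hTk k]
      have habs : |p.eval (xs k)| < c := hcon _ (hxsmem k)
      have h1 : (-1:ℝ)^k * p.eval (xs k) ≤ |p.eval (xs k)| := by
        rcases Nat.even_or_odd k with he | ho
        · rw [he.neg_one_pow, one_mul]; exact le_abs_self _
        · rw [ho.neg_one_pow]; rw [neg_one_mul]; exact neg_le_abs _
      have h2 : ((-1:ℝ)^k)^2 = 1 := by
        rcases Nat.even_or_odd k with he | ho
        · rw [he.neg_one_pow]; norm_num
        · rw [ho.neg_one_pow]; norm_num
      have : (-1:ℝ)^k * q.eval (xs k) = c * ((-1:ℝ)^k)^2 - (-1:ℝ)^k * p.eval (xs k) := by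
        rw [hqe]; ring
      rw [this, h2, mul_one]
      linarith
    -- roots of q between consecutive extremal points
    have hcont : ∀ a b : ℝ, ContinuousOn (fun y => q.eval y) (Set.Icc a b) :=
      fun a b => (Polynomial.continuous q).continuousOn
    have hroot : ∀ k : Fin n, ∃ y ∈ Set.Ioo (xs (k+1)) (xs k), q.eval y = 0 := by
      intro k
      have hlt : xs (k+1) < xs k := hxanti k (k+1) (by omega) (by omega)
      rcases Nat.even_or_odd (k:ℕ) with he | ho
      · -- q(xs k) > 0, q(xs (k+1)) < 0
        have hk1 : q.eval (xs k) > 0 := by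
          have := hsign k; rwa [he.neg_one_pow, one_mul] at this
        have hk2 : q.eval (xs (k+1)) < 0 := by
          have := hsign (k+1)
          have ho1 : Odd ((k:ℕ)+1) := Even.add_one he
          rw [ho1.neg_one_pow, neg_one_mul] at this
          linarith
        have := intermediate_value_Ioo hlt.le (hcont _ _)
        obtain ⟨y, hy, hy0⟩ := this ⟨hk2, hk1⟩
        exact ⟨y, hy, hy0⟩
      · have hk1 : q.eval (xs k) < 0 := by
          have := hsign k
          rw [ho.neg_one_pow, neg_one_mul] at this
          linarith
        have hk2 : q.eval (xs (k+1)) > 0 := by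
          have := hsign (k+1)
          rwa [(ho.add_one).neg_one_pow, one_mul] at this
        have := intermediate_value_Ioo' hlt.le (hcont _ _)
        obtain ⟨y, hy, hy0⟩ := this ⟨hk1, hk2⟩
        exact ⟨y, hy, hy0⟩
    choose y hy hy0 using hroot
    have hyinj : Function.Injective y := by
      have hmono : ∀ a b : Fin n, a < b → y b < y a := by
        intro a b hab
        have h1 : y b < xs b := (hy b).2
        have h2 : xs (a+1) < y a := (hy a).1
        have h3 : xs (b:ℕ) ≤ xs ((a:ℕ)+1) := by
          rcases eq_or_lt_of_le (show (a:ℕ)+1 ≤ (b:ℕ) from hab) with h | h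
          · rw [h]
          · exact (hxanti _ _ h (by omega)).le
        linarith
      intro a b hab
      by_contra hne
      rcases lt_or_gt_of_ne hne with h | h
      · exact absurd hab (ne_of_gt (hmono a b h))
      · exact absurd hab (ne_of_lt (hmono b a h))
    have : q = 0 := by
      apply Polynomial.eq_zero_of_natDegree_lt_card_of_eval_eq_zero q hyinj hy0
      rwa [Fintype.card_fin]
    exact hqne this
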